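/- arXiv:1002.2752 — 2 statements merged into one kernel-verified Lean document; each statement's English description precedes it below -/
import Mathlib

section
/- The sphere U₄' = {x ∈ E | N(x) = −(z − z⁻¹)²} is equal to (z − z⁻¹)·U₄, where U₄ = {x ∈ E | N(x) = 1}. -/
open LaurentPolynomial

/-- `A = ℤ[z, z⁻¹]`, the Laurent polynomial ring over the integers. -/
abbrev A : Type := LaurentPolynomial ℤ

/-- The conjugation `f(z) ↦ f(z⁻¹)` on `A`. -/
noncomputable def conj : A →+* A := (LaurentPolynomial.invert (R := ℤ)).toRingEquiv.toRingHom

/-- The fixed subring `A₀ = {f ∈ A | f* = f}`. -/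
noncomputable def A0 : Subring A := RingHom.eqLocus conj (RingHom.id A)

/-- `E = A⁴`. -/
abbrev E : Type := Fin 4 → A

/-- The norm `N(x) = ∑ₖ xₖ xₖ*`. -/
noncomputable def N (x : E) : A := ∑ k, x k * conj (x k)

/-- The standard `A`-basis vectors of `E = A⁴`. -/
noncomputable def e (k : Fin 4) : E := Pi.single k 1

/-- Yang's multiplication `x ∘ y = (p, q, r, s)`. -/
noncomputable def yang (x y : E) : E :=
  ![x 0 * y 0 - x 1 * conj (y 1) - x 2 * conj (y 2) - x 3 * conj (y 3),
    x 0 * y 1 + x 1 * conj (y 0) + conj (x 2) * conj (y 3) - conj (x 3) * conj (y 2),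
    x 0 * y 2 - conj (x 1) * conj (y 3) + x 2 * conj (y 0) + conj (x 3) * conj (y 1),
    x 0 * y 3 + conj (x 1) * conj (y 2) - conj (x 2) * conj (y 1) + x 3 * conj (y 0)]

section aux

noncomputable def ev (u : ℤˣ) : A →+* ℤ :=
  AddMonoidAlgebra.liftNCRingHom (RingHom.id ℤ)
    ((Units.coeHom ℤ).comp (zpowersHom ℤˣ u)) (fun _ _ => Commute.all _ _)

lemma upow_neg (u : ℤˣ) (n : ℤ) : u ^ (-n) = u ^ n := by
  have h : u⁻¹ = u := inv_eq_of_mul_eq_one_left (Int.units_mul_self u)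
  rw [zpow_neg, ← inv_zpow, h]

lemma ev_T (u : ℤˣ) (n : ℤ) : ev u (T n) = ((u ^ n : ℤˣ) : ℤ) := by
  show AddMonoidAlgebra.liftNC _ _ (AddMonoidAlgebra.single n (1:ℤ)) = _
  rw [AddMonoidAlgebra.liftNC_single]
  simp [zpowersHom_apply]

lemma conj_apply (f : A) : conj f = LaurentPolynomial.invert f := rfl

lemma ev_conj (u : ℤˣ) (f : A) : ev u (conj f) = ev u f := by
  induction f using LaurentPolynomial.induction_on' with
  | add p q hp hq => simp [map_add, hp, hq]
  | C_mul_T n a =>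
      have : conj (LaurentPolynomial.C a * T n) = LaurentPolynomial.C a * T (-n) := by
        rw [conj_apply, map_mul, invert_T, invert_C]
      rw [this, map_mul, map_mul, ev_T, ev_T, upow_neg]

lemma ev_C (u : ℤˣ) (a : ℤ) : ev u (LaurentPolynomial.C a) = a := by
  show AddMonoidAlgebra.liftNC _ _ (AddMonoidAlgebra.single 0 a) = _
  rw [AddMonoidAlgebra.liftNC_single]
  simp [zpowersHom_apply]

open Polynomial in
lemma ev_toLaurent (u : ℤˣ) (p : ℤ[X]) :
    ev u (Polynomial.toLaurent p) = p.eval (u : ℤ) := by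
  have h : (ev u).comp Polynomial.toLaurent = Polynomial.evalRingHom (u : ℤ) := by
    apply Polynomial.ringHom_ext
    · intro a
      simp [Polynomial.toLaurent_C, ev_C]
    · simp [Polynomial.toLaurent_X, ev_T]
  exact DFunLike.congr_fun h p

open Polynomial in
lemma dvd_of_ev (f : A) (h1 : ev 1 f = 0) (h2 : ev (-1) f = 0) :
    (T 1 - T (-1) : A) ∣ f := by
  obtain ⟨n, p, hp⟩ := f.exists_T_pow
  have e1 : p.eval 1 = 0 := by
    rw [← Units.val_one (α := ℤ), ← ev_toLaurent, hp, map_mul, h1, zero_mul]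
  have e2 : p.eval (-1) = 0 := by
    have h := ev_toLaurent (-1) p
    rw [hp, map_mul, h2, zero_mul] at h
    simpa using h.symm
  have d1 : (X - Polynomial.C 1) ∣ p := Polynomial.dvd_iff_isRoot.mpr e1
  have d2 : (X - Polynomial.C (-1)) ∣ p := Polynomial.dvd_iff_isRoot.mpr e2
  obtain ⟨q, hq⟩ := d1
  have d2' : (X - Polynomial.C (-1)) ∣ q := by
    have hprime : Prime (X - Polynomial.C (-1 : ℤ)) := Polynomial.prime_X_sub_C _
    rcases (hprime.dvd_mul.mp (hq ▸ d2)) with h | h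
    · exfalso
      obtain ⟨r, hr⟩ := h
      have := congrArg (Polynomial.eval (-1 : ℤ)) hr
      simp at this
    · exact h
  obtain ⟨r, hr⟩ := d2'
  have hf : f = Polynomial.toLaurent p * T (-n) := by
    rw [hp, mul_assoc, ← T_add, add_neg_cancel, T_zero, mul_one]
  refine ⟨T 1 * Polynomial.toLaurent r * T (-n), ?_⟩
  rw [hf, hq, hr, map_mul, map_mul]
  have hx : (Polynomial.toLaurent (X - Polynomial.C (1:ℤ)) : A) = T 1 - 1 := by
    simp [Polynomial.toLaurent_X]
  have hy : (Polynomial.toLaurent (X - Polynomial.C (-1:ℤ)) : A) = T 1 + 1 := by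
    simp [Polynomial.toLaurent_X]
  rw [hx, hy]
  have hTT : (T (-1) : A) * T 1 = 1 := by
    rw [← T_add]; norm_num [T_zero]
  have key : (T 1 - T (-1) : A) = (T 1 - 1) * ((T 1 + 1) * T (-1)) := by
    have h5 : ((T 1 - 1) * ((T 1 + 1) * T (-1)) : A) = T 1 * T 1 * T (-1) - T (-1) := by
      ring
    rw [h5, ← T_add, ← T_add]
    norm_num
  rw [key]
  linear_combination (-(T 1 - 1) * (T 1 + 1) * Polynomial.toLaurent r * T (-(n:ℤ)) : A) * hTT

lemma conj_c : conj (T 1 - T (-1) : A) = -(T 1 - T (-1)) := by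
  rw [conj_apply, map_sub, invert_T, invert_T]
  ring

lemma N_smul (c : A) (x : E) : N (c • x) = c * conj c * N x := by
  unfold N
  rw [Finset.mul_sum]
  refine Finset.sum_congr rfl fun k _ => ?_
  rw [Pi.smul_apply, smul_eq_mul, map_mul]
  ring

lemma c_ne : (T 1 - T (-1) : A) ≠ 0 := by
  refine sub_ne_zero.mpr fun h => ?_
  have h1 : (T 1 : A).coeff 1 = (T (-1) : A).coeff 1 := by rw [h]
  simp [T_apply] at h1

end aux

/-- The sphere `U₄' = {x ∈ E | N(x) = −(z − z⁻¹)²}` equals `(z − z⁻¹) U₄`,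
where `U₄ = {x ∈ E | N(x) = 1}`. -/
theorem U4'_eq :
    {x : E | N x = -(T 1 - T (-1)) ^ 2} =
      (fun x : E => (T 1 - T (-1) : A) • x) '' {x : E | N x = 1} := by
  ext x
  simp only [Set.mem_setOf_eq, Set.mem_image]
  constructor
  · intro hx
    have hu : ∀ u : ℤˣ, ∀ k, ev u (x k) = 0 := by
      intro u k
      have hc : ev u (T 1 - T (-1) : A) = 0 := by
        rw [map_sub, ev_T, ev_T, upow_neg]
        ring
      have hsum : ∑ j, (ev u (x j)) ^ 2 = 0 := by
        have h := congrArg (ev u) hx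
        unfold N at h
        rw [map_sum, map_neg, map_pow, hc] at h
        calc ∑ j, (ev u (x j)) ^ 2 = ∑ j, ev u (x j * conj (x j)) := by
              refine Finset.sum_congr rfl fun j _ => ?_
              rw [map_mul, ev_conj]; ring
          _ = -0 ^ 2 := h
          _ = 0 := by ring
      have h0 := (Finset.sum_eq_zero_iff_of_nonneg
        (fun j _ => sq_nonneg (ev u (x j)))).mp hsum k (Finset.mem_univ k)
      exact pow_eq_zero_iff (two_ne_zero) |>.mp h0
    choose d hd using fun k => dvd_of_ev (x k) (hu 1 k) (hu (-1) k)
    have hxd : x = (T 1 - T (-1) : A) • d := funext fun k => hd k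
    refine ⟨d, ?_, hxd.symm⟩
    have hNx : N x = ((T 1 - T (-1) : A) * conj (T 1 - T (-1))) * N d := by
      rw [hxd, N_smul]
    rw [conj_c] at hNx
    have : (-(T 1 - T (-1) : A) ^ 2) * N d = (-(T 1 - T (-1) : A) ^ 2) * 1 := by
      calc (-(T 1 - T (-1) : A) ^ 2) * N d
          = (T 1 - T (-1) : A) * -(T 1 - T (-1)) * N d := by ring
        _ = N x := hNx.symm
        _ = -(T 1 - T (-1)) ^ 2 := hx
        _ = (-(T 1 - T (-1) : A) ^ 2) * 1 := by ring
    have hne : (-(T 1 - T (-1) : A) ^ 2) ≠ 0 :=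
      neg_ne_zero.mpr (pow_ne_zero _ c_ne)
    exact mul_left_cancel₀ hne this
  · rintro ⟨y, hy, rfl⟩
    rw [N_smul, hy, mul_one, conj_c]
    ring
end

section
/- For any index i ∈ {0,1,2,3}: either (a e₀)·(b e_i) = a b e_i for all a, b ∈ A, or (a e₀)·(b e_i) = a* b e_i for all a, b ∈ A; moreover for i = 0 necessarily (a e₀)·(b e₀) = a b e₀ for all a, b ∈ A. Consequently there exists an involution τ ∈ Γ with τ² = 1 such that the multiplication x ⋆ y = τ(τ(x)·τ(y)) satisfies the Lagrange identity, has e₀ as identity element, satisfies (a e₀) ⋆ y = a y for all a ∈ A and y ∈ E, and τ : (E,⋆) → (E,·) is an isomorphism of unital A₀-algebras. -/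
open LaurentPolynomial

set_option linter.unnecessarySeqFocus false
set_option maxHeartbeats 1000000

lemma conj_apply' (f : A) (n : ℤ) : (conj f).coeff n = f.coeff (-n) := invert_apply f n

lemma conj_single (n : ℤ) (c : ℤ) : conj (AddMonoidAlgebra.single n c) = AddMonoidAlgebra.single (-n) c := by
  ext m
  rw [conj_apply']
  simp only [AddMonoidAlgebra.coeff_single, Finsupp.single_apply]
  split_ifs with h1 h2 h2 <;> first | rfl | omega

lemma conj_T (n : ℤ) : conj (T n) = T (-n) := conj_single n 1

lemma conj_C (r : ℤ) : conj (C r) = C r := by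
  have : (C r : A) = AddMonoidAlgebra.single 0 r := by
    rw [LaurentPolynomial.single_eq_C_mul_T, T_zero, mul_one]
  rw [this, conj_single, neg_zero]

lemma conj_conj (f : A) : conj (conj f) = f := LaurentPolynomial.involutive_invert f

lemma coe_congr {a b : A} (h : a = b) (m : ℤ) : a.coeff m = b.coeff m := by rw [h]

lemma add_self_inj' {a b : A} (h : a + a = b + b) : a = b := by
  ext m
  have h1 := coe_congr h m
  rw [AddMonoidAlgebra.coeff_add, AddMonoidAlgebra.coeff_add, Finsupp.add_apply,
    Finsupp.add_apply] at h1
  omega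

lemma two_eq_single : (2:A) = AddMonoidAlgebra.single 0 2 := by
  have h1 : (1:A) = AddMonoidAlgebra.single 0 1 := rfl
  rw [← one_add_one_eq_two, h1, ← AddMonoidAlgebra.single_add]
  norm_num

lemma solve_pm (n p c : ℤ) (hc : c = 1 ∨ c = -1) (hp : 0 < p)
    (h : (AddMonoidAlgebra.single n c : A) + AddMonoidAlgebra.single (-n) c
        = AddMonoidAlgebra.single p 1 + AddMonoidAlgebra.single (-p) 1) :
    (n = p ∧ c = 1) ∨ (n = -p ∧ c = 1) := by
  have h1 := coe_congr h n
  simp only [AddMonoidAlgebra.coeff_add, Finsupp.add_apply, AddMonoidAlgebra.coeff_single,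
    Finsupp.single_apply] at h1
  split_ifs at h1 <;> omega

lemma solve_const (n c : ℤ) (hc : c = 1 ∨ c = -1)
    (h : (AddMonoidAlgebra.single n c : A) + AddMonoidAlgebra.single (-n) c = (2:A)) :
    n = 0 ∧ c = 1 := by
  rw [two_eq_single] at h
  have h1 := coe_congr h n
  simp only [AddMonoidAlgebra.coeff_add, Finsupp.add_apply, AddMonoidAlgebra.coeff_single,
    Finsupp.single_apply] at h1
  split_ifs at h1 <;> omega

lemma TT_ne_zero (p : ℤ) (hp : 0 < p) :
    (0:A) ≠ AddMonoidAlgebra.single p 1 + AddMonoidAlgebra.single (-p) 1 := by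
  intro h
  have h1 := coe_congr h.symm p
  simp only [AddMonoidAlgebra.coeff_add, Finsupp.add_apply, AddMonoidAlgebra.coeff_single,
    Finsupp.single_apply] at h1
  split_ifs at h1 <;> simp at h1 <;> omega

lemma zero_ne_two' : (0:A) ≠ 2 := by
  intro h
  rw [two_eq_single] at h
  have h1 := coe_congr h.symm 0
  rw [AddMonoidAlgebra.coeff_single, Finsupp.single_apply] at h1
  simp at h1

lemma Tm_mul_T (m n : ℤ) : (T m : A) * T n = T (m + n) := (T_add m n).symm

lemma T_one_conj_mul : (T 1 : A) * conj (T 1) = 1 := by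
  rw [conj_T, Tm_mul_T]; norm_num

lemma decompT (n : ℤ) : ∃ c d : A, conj c = c ∧ conj d = d ∧ T n = c + d * T 1 := by
  induction n using Int.induction_on with
  | zero => exact ⟨1, 0, by simp [map_one], by simp [map_zero], by rw [T_zero]; ring⟩
  | succ n ih =>
    obtain ⟨c, d, hc, hd, hT⟩ := ih
    refine ⟨-d, c + d * (T 1 + T (-1)), ?_, ?_, ?_⟩
    · rw [map_neg, hd]
    · rw [map_add, map_mul, map_add, hc, hd, conj_T, conj_T]; ring
    · have h1 : (T (n+1) : A) = T n * T 1 := by rw [← T_add]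
      have h3 : (T (-1) : A) * T 1 = 1 := by rw [Tm_mul_T]; norm_num
      rw [h1, hT]
      linear_combination (-d) * h3
  | pred n ih =>
    obtain ⟨c, d, hc, hd, hT⟩ := ih
    refine ⟨c * (T 1 + T (-1)) + d, -c, ?_, ?_, ?_⟩
    · rw [map_add, map_mul, map_add, hc, hd, conj_T, conj_T]; ring
    · rw [map_neg, hc]
    · have h1 : (T (-(n:ℤ)-1) : A) = T (-n) * T (-1) := by rw [Tm_mul_T]; ring_nf
      have h3 : (T (-1) : A) * T 1 = 1 := by rw [Tm_mul_T]; norm_num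
      rw [h1, hT]
      linear_combination d * h3

lemma decomp (a : A) : ∃ c d : A, conj c = c ∧ conj d = d ∧ a = c + d * T 1 := by
  induction a using LaurentPolynomial.induction_on' with
  | add p q hp hq =>
    obtain ⟨c, d, hc, hd, hp'⟩ := hp
    obtain ⟨c', d', hc', hd', hq'⟩ := hq
    exact ⟨c + c', d + d', by rw [map_add, hc, hc'], by rw [map_add, hd, hd'],
      by rw [hp', hq']; ring⟩
  | C_mul_T n r =>
    obtain ⟨c, d, hc, hd, hT⟩ := decompT n
    exact ⟨C r * c, C r * d, by rw [map_mul, conj_C, hc], by rw [map_mul, conj_C, hd],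
      by rw [hT]; ring⟩


lemma coeff0 (f : A) : (f * conj f).coeff 0 = ∑ a ∈ f.coeff.support, (f.coeff a)^2 := by
  classical
  rw [AddMonoidAlgebra.coeff_mul, Finsupp.sum]
  apply Finset.sum_congr rfl
  intro a _
  rw [Finsupp.sum, Finset.sum_eq_single (-a)]
  · simp [conj, invert_apply, sq]
  · intro b _ hb; rw [if_neg]; omega
  · intro h
    have : (conj f).coeff (-a) = 0 := Finsupp.notMem_support_iff.mp h
    simp [conj, invert_apply] at this
    simp [this]

lemma sq_zero (f : A) (h : ∑ a ∈ f.coeff.support, (f.coeff a)^2 = 0) : f = 0 := by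
  classical
  ext a
  by_cases ha : a ∈ f.coeff.support
  · have h1 : ∀ b ∈ f.coeff.support, (0:ℤ) ≤ (f.coeff b)^2 := fun b _ => sq_nonneg _
    have := (Finset.sum_eq_zero_iff_of_nonneg h1).mp h a ha
    exact pow_eq_zero_iff (by norm_num) |>.mp this
  · exact Finsupp.notMem_support_iff.mp ha

lemma sq_one (f : A) (h : ∑ a ∈ f.coeff.support, (f.coeff a)^2 = 1) :
    ∃ (n : ℤ) (c : ℤ), (c = 1 ∨ c = -1) ∧ f = AddMonoidAlgebra.single n c := by
  classical
  have hne : f.coeff.support.Nonempty := by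
    rcases Finset.eq_empty_or_nonempty f.coeff.support with h0 | h0
    · rw [h0] at h; simp at h
    · exact h0
  obtain ⟨n, hn⟩ := hne
  have hfa : f.coeff n ≠ 0 := Finsupp.mem_support_iff.mp hn
  have h1 : 1 ≤ (f.coeff n)^2 := by rcases hfa.lt_or_gt with h'|h' <;> nlinarith
  have hrest : ∑ a ∈ f.coeff.support \ {n}, (f.coeff a)^2 = 1 - (f.coeff n)^2 := by
    have := Finset.sum_sdiff_eq_sub (f := fun a => (f.coeff a)^2) (Finset.singleton_subset_iff.mpr hn)
    simp at this
    omega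
  have hrnn : (0:ℤ) ≤ ∑ a ∈ f.coeff.support \ {n}, (f.coeff a)^2 :=
    Finset.sum_nonneg fun b _ => sq_nonneg _
  have hsq : (f.coeff n)^2 = 1 := by omega
  have hzero : ∀ b ∈ f.coeff.support \ {n}, f.coeff b = 0 := by
    intro b hb
    have h2 : ∀ b ∈ f.coeff.support \ {n}, (0:ℤ) ≤ (f.coeff b)^2 := fun b _ => sq_nonneg _
    have := (Finset.sum_eq_zero_iff_of_nonneg h2).mp (by omega) b hb
    exact pow_eq_zero_iff (by norm_num) |>.mp this
  have hc : f.coeff n = 1 ∨ f.coeff n = -1 := by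
    have : (f.coeff n - 1) * (f.coeff n + 1) = 0 := by nlinarith
    rcases mul_eq_zero.mp this with h' | h' <;> [left; right] <;> omega
  refine ⟨n, f.coeff n, hc, ?_⟩
  ext b
  rw [AddMonoidAlgebra.coeff_single, Finsupp.single_apply]
  by_cases hb : b = n
  · subst hb; simp
  · rw [if_neg (fun hh => hb hh.symm)]
    by_cases hbs : b ∈ f.coeff.support
    · exact hzero b (Finset.mem_sdiff.mpr ⟨hbs, by simp [hb]⟩)
    · exact Finsupp.notMem_support_iff.mp hbs

lemma norm_one_classify (f : Fin 4 → A) (h : ∑ k, f k * conj (f k) = 1) :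
    ∃ (k : Fin 4) (n : ℤ) (c : ℤ), (c = 1 ∨ c = -1) ∧ f = Pi.single k (AddMonoidAlgebra.single n c) := by
  classical
  have h0 : (∑ k, f k * conj (f k)).coeff 0 = (1:A).coeff 0 := by rw [h]
  rw [AddMonoidAlgebra.coeff_sum, Finsupp.finset_sum_apply] at h0
  simp only [coeff0] at h0
  have h1 : (1:A).coeff 0 = 1 := by
    show (Finsupp.single (0:ℤ) (1:ℤ)) 0 = 1
    exact Finsupp.single_eq_same
  rw [h1] at h0
  set S : Fin 4 → ℤ := fun k => ∑ a ∈ (f k).coeff.support, ((f k).coeff a)^2 with hS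
  have hsum : S 0 + S 1 + S 2 + S 3 = 1 := by
    rw [hS]; rw [Fin.sum_univ_four] at h0; exact h0
  have hnn : ∀ k, 0 ≤ S k := fun k => Finset.sum_nonneg fun b _ => sq_nonneg _
  have hcase : ∃ k : Fin 4, S k = 1 ∧ ∀ j, j ≠ k → S j = 0 := by
    have n0 := hnn 0; have n1 := hnn 1; have n2 := hnn 2; have n3 := hnn 3
    have : (S 0 = 1 ∧ S 1 = 0 ∧ S 2 = 0 ∧ S 3 = 0) ∨ (S 1 = 1 ∧ S 0 = 0 ∧ S 2 = 0 ∧ S 3 = 0)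
        ∨ (S 2 = 1 ∧ S 0 = 0 ∧ S 1 = 0 ∧ S 3 = 0) ∨ (S 3 = 1 ∧ S 0 = 0 ∧ S 1 = 0 ∧ S 2 = 0) := by
      omega
    rcases this with ⟨a,b,c,d⟩|⟨a,b,c,d⟩|⟨a,b,c,d⟩|⟨a,b,c,d⟩
    · exact ⟨0, a, by intro j hj; fin_cases j <;> simp_all⟩
    · exact ⟨1, a, by intro j hj; fin_cases j <;> simp_all⟩
    · exact ⟨2, a, by intro j hj; fin_cases j <;> simp_all⟩
    · exact ⟨3, a, by intro j hj; fin_cases j <;> simp_all⟩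
  obtain ⟨k, hk1, hk0⟩ := hcase
  obtain ⟨n, c, hc, hfk⟩ := sq_one (f k) hk1
  refine ⟨k, n, c, hc, ?_⟩
  funext j
  by_cases hj : j = k
  · subst hj; rw [Pi.single_eq_same]; exact hfk
  · rw [Pi.single_eq_of_ne hj]
    exact sq_zero (f j) (hk0 j hj)


noncomputable def B (x y : E) : A := ∑ k, (x k * conj (y k) + y k * conj (x k))

lemma N_add' (x y : E) : N (x + y) = N x + N y + B x y := by
  unfold N B
  rw [← Finset.sum_add_distrib, ← Finset.sum_add_distrib]
  apply Finset.sum_congr rfl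
  intro k _
  simp only [Pi.add_apply, map_add]
  ring

lemma B_comm (x y : E) : B x y = B y x := by
  unfold B
  apply Finset.sum_congr rfl
  intro k _
  ring

lemma B_add_left (x x' y : E) : B (x + x') y = B x y + B x' y := by
  unfold B
  rw [← Finset.sum_add_distrib]
  apply Finset.sum_congr rfl
  intro k _
  simp only [Pi.add_apply, map_add]
  ring

lemma B_add_right (x y y' : E) : B x (y + y') = B x y + B x y' := by
  unfold B
  rw [← Finset.sum_add_distrib]
  apply Finset.sum_congr rfl
  intro k _
  simp only [Pi.add_apply, map_add]
  ring

section
variable (mul : E →ₗ[A0] E →ₗ[A0] E) (hL : ∀ x y : E, N (mul x y) = N x * N y)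

include hL in
lemma pol1 (x y y' : E) : B (mul x y) (mul x y') = N x * B y y' := by
  have h := hL x (y + y')
  rw [map_add, N_add', N_add'] at h
  rw [hL x y, hL x y'] at h
  linear_combination h

include hL in
lemma pol2 (x x' y y' : E) :
    B (mul x y) (mul x' y') + B (mul x y') (mul x' y) = B x x' * B y y' := by
  have h := pol1 mul hL (x + x') y y'
  rw [map_add, LinearMap.add_apply, LinearMap.add_apply, B_add_left, B_add_right,
    B_add_right, N_add'] at h
  rw [pol1 mul hL x y y', pol1 mul hL x' y y'] at h
  have hc := B_comm (mul x' y) (mul x y')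
  linear_combination h - hc
end

lemma smul_e (a : A) (k : Fin 4) : a • e k = Pi.single k a := by
  funext j
  by_cases h : j = k
  · subst h; simp [e]
  · simp [e, Pi.single_eq_of_ne h]

lemma N_single (k : Fin 4) (g : A) : N (Pi.single k g) = g * conj g := by
  unfold N
  rw [Finset.sum_eq_single k]
  · rw [Pi.single_eq_same]
  · intro j _ hj
    rw [Pi.single_eq_of_ne hj, map_zero, mul_zero]
  · intro h; exact absurd (Finset.mem_univ k) h

lemma B_single (k i : Fin 4) (g h : A) :
    B (Pi.single k g) (Pi.single i h) =
      if k = i then g * conj h + h * conj g else 0 := by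
  unfold B
  by_cases hki : k = i
  · subst hki
    rw [if_pos rfl, Finset.sum_eq_single k]
    · rw [Pi.single_eq_same, Pi.single_eq_same]
    · intro j _ hj
      simp [Pi.single_eq_of_ne hj]
    · intro h'; exact absurd (Finset.mem_univ k) h'
  · rw [if_neg hki]
    apply Finset.sum_eq_zero
    intro j _
    by_cases hj : j = k
    · subst hj
      simp [Pi.single_eq_of_ne hki]
    · simp [Pi.single_eq_of_ne hj]

lemma e_def (k : Fin 4) : e k = Pi.single k 1 := rfl

lemma T_eq_single (n : ℤ) : (T n : A) = AddMonoidAlgebra.single n 1 := rfl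

lemma one_eq_single : (1 : A) = AddMonoidAlgebra.single 0 1 := rfl

lemma N_def (x : E) : N x = ∑ k, x k * conj (x k) := rfl

lemma sq_D : ((T 1 : A) + T (-1)) * (T 1 + T (-1)) = T 2 + T (-2) + 2 := by
  have a1 := Tm_mul_T 1 1
  have a2 : (T 1 : A) * T (-1) = 1 := by rw [Tm_mul_T]; norm_num
  have a3 := Tm_mul_T (-1) (-1)
  norm_num at a1 a3
  linear_combination a1 + a3 + 2 * a2

section KEY
variable (mul : E →ₗ[A0] E →ₗ[A0] E) (hL : ∀ x y : E, N (mul x y) = N x * N y)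
  (hid : ∀ x : E, mul (e 0) x = x ∧ mul x (e 0) = x)

include hL hid in
lemma key (i : Fin 4) :
    (mul ((T 1 : A) • e 0) (e i) = (T 1 : A) • e i ∧ mul ((T 1 : A) • e 0) ((T 1 : A) • e i) = (T 2 : A) • e i) ∨
    (mul ((T 1 : A) • e 0) (e i) = (T (-1) : A) • e i ∧ mul ((T 1 : A) • e 0) ((T 1 : A) • e i) = e i) := by
  classical
  have hsm0 : (T 1 : A) • e 0 = Pi.single (0 : Fin 4) (T 1) := smul_e _ _
  have hsmi : (T 1 : A) • e i = Pi.single i (T 1) := smul_e _ _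
  -- norms
  have hNx : N ((T 1 : A) • e 0) = 1 := by
    rw [hsm0, N_single, T_one_conj_mul]
  have hNe : ∀ j : Fin 4, N (e j) = 1 := by
    intro j; rw [e_def, N_single, map_one, mul_one]
  have hNT : N ((T 1 : A) • e i) = 1 := by
    rw [hsmi, N_single, T_one_conj_mul]
  -- B values on basis
  have hBx0 : B ((T 1 : A) • e 0) (e 0) = T 1 + T (-1) := by
    rw [hsm0, e_def, B_single, if_pos rfl, map_one, mul_one, one_mul, conj_T]
  have hBee : B (e i) (e i) = 2 := by
    rw [e_def, B_single, if_pos rfl, map_one, mul_one]; norm_num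
  have hBTe : B ((T 1 : A) • e i) (e i) = T 1 + T (-1) := by
    rw [hsmi, e_def, B_single, if_pos rfl, map_one, mul_one, one_mul, conj_T]
  -- u := mul (T1 • e0) (e i)
  set u : E := mul ((T 1 : A) • e 0) (e i) with hu_def
  have hNu : N u = 1 := by rw [hu_def, hL, hNx, hNe, one_mul]
  obtain ⟨k, n, c, hc, hu⟩ := norm_one_classify u (by rw [← N_def]; exact hNu)
  -- B u (e i) = T 1 + T (-1)
  have hBuei : B u (e i) = T 1 + T (-1) := by
    have h2 := pol2 mul hL ((T 1 : A) • e 0) (e 0) (e i) (e i)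
    rw [(hid (e i)).1, hBx0, hBee] at h2
    exact add_self_inj' (by linear_combination h2)
  -- identify u
  have hki : k = i := by
    by_contra hk
    rw [hu, e_def, B_single, if_neg hk] at hBuei
    exact TT_ne_zero 1 one_pos (by rw [hBuei, T_eq_single, T_eq_single])
  rw [hki] at hu
  have hsolveu : (n = 1 ∧ c = 1) ∨ (n = -1 ∧ c = 1) := by
    rw [hu, e_def, B_single, if_pos rfl, map_one, mul_one, one_mul, conj_single] at hBuei
    exact solve_pm n 1 c hc one_pos (by rw [hBuei, T_eq_single, T_eq_single])
  -- w := mul (T1 • e0) (T1 • e i)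
  set w : E := mul ((T 1 : A) • e 0) ((T 1 : A) • e i) with hw_def
  have hNw : N w = 1 := by rw [hw_def, hL, hNx, hNT, one_mul]
  obtain ⟨k', m, c', hc', hw⟩ := norm_one_classify w (by rw [← N_def]; exact hNw)
  -- B w u = T 1 + T (-1)
  have hBwu : B w u = T 1 + T (-1) := by
    have h1 := pol1 mul hL ((T 1 : A) • e 0) ((T 1 : A) • e i) (e i)
    rw [← hw_def, ← hu_def, hNx, hBTe, one_mul] at h1
    exact h1
  -- B w (e i) + B u (T1 • e i) = (T1 + T(-1))^2
  have hp2 : B w (e i) + B u ((T 1 : A) • e i) = T 2 + T (-2) + 2 := by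
    have h2 := pol2 mul hL ((T 1 : A) • e 0) (e 0) ((T 1 : A) • e i) (e i)
    rw [(hid (e i)).1, (hid ((T 1 : A) • e i)).1, ← hw_def, ← hu_def, hBx0, hBTe] at h2
    rw [h2]; exact sq_D
  rcases hsolveu with ⟨hn, hcc⟩ | ⟨hn, hcc⟩
  · -- u = (T 1 : A) • e i
    subst hn; subst hcc
    have hu' : u = (T 1 : A) • e i := by rw [hu, hsmi, T_eq_single]
    left
    refine ⟨hu', ?_⟩
    -- B u (T1 • e i) = 2
    have hBuT : B u ((T 1 : A) • e i) = 2 := by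
      rw [hu', hsmi, B_single, if_pos rfl, conj_T, Tm_mul_T]
      norm_num
    have hBwei : B w (e i) = T 2 + T (-2) := by linear_combination hp2 - hBuT
    have hk'i : k' = i := by
      by_contra hk
      rw [hw, e_def, B_single, if_neg hk] at hBwei
      exact TT_ne_zero 2 two_pos (by rw [hBwei, T_eq_single, T_eq_single])
    rw [hk'i] at hw
    have hsolvew : (m = 2 ∧ c' = 1) ∨ (m = -2 ∧ c' = 1) := by
      rw [hw, e_def, B_single, if_pos rfl, map_one, mul_one, one_mul, conj_single] at hBwei
      exact solve_pm m 2 c' hc' two_pos (by rw [hBwei, T_eq_single, T_eq_single])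
    rcases hsolvew with ⟨hm, hcc'⟩ | ⟨hm, hcc'⟩
    · subst hm; subst hcc'
      rw [hw, smul_e, T_eq_single]
    · exfalso
      subst hm; subst hcc'
      rw [hw, hu', hsmi, ← T_eq_single, B_single, if_pos rfl, conj_T, conj_T,
        Tm_mul_T, Tm_mul_T] at hBwu
      have h3 := coe_congr hBwu 1
      rw [AddMonoidAlgebra.coeff_add, AddMonoidAlgebra.coeff_add, Finsupp.add_apply, Finsupp.add_apply, T_apply, T_apply, T_apply, T_apply] at h3
      norm_num at h3
  · -- u = (T (-1) : A) • e i
    subst hn; subst hcc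
    have hu' : u = (T (-1) : A) • e i := by rw [hu, smul_e, T_eq_single]
    right
    refine ⟨hu', ?_⟩
    have hBuT : B u ((T 1 : A) • e i) = T 2 + T (-2) := by
      rw [hu', smul_e, hsmi, B_single, if_pos rfl, conj_T, conj_T, Tm_mul_T, Tm_mul_T]
      norm_num [add_comm]
    have hBwei : B w (e i) = 2 := by linear_combination hp2 - hBuT
    have hk'i : k' = i := by
      by_contra hk
      rw [hw, e_def, B_single, if_neg hk] at hBwei
      exact zero_ne_two' hBwei
    rw [hk'i] at hw
    have hsolvew : m = 0 ∧ c' = 1 := by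
      rw [hw, e_def, B_single, if_pos rfl, map_one, mul_one, one_mul, conj_single] at hBwei
      exact solve_const m c' hc' hBwei
    obtain ⟨hm, hcc'⟩ := hsolvew
    subst hm; subst hcc'
    rw [hw, e_def, one_eq_single]
end KEY

section ACT
variable (mul : E →ₗ[A0] E →ₗ[A0] E)
  (hid : ∀ x : E, mul (e 0) x = x ∧ mul x (e 0) = x)

include hid in
lemma scalarP (i : Fin 4)
    (h1 : mul ((T 1 : A) • e 0) (e i) = (T 1 : A) • e i)
    (h2 : mul ((T 1 : A) • e 0) ((T 1 : A) • e i) = (T 2 : A) • e i) :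
    ∀ a b : A, mul (a • e 0) (b • e i) = (a * b) • e i := by
  have a1 : (T 1 : A) * T 1 = T 2 := by rw [Tm_mul_T]; norm_num
  have inner : ∀ b : A, mul ((T 1 : A) • e 0) (b • e i) = ((T 1 : A) * b) • e i := by
    intro b
    obtain ⟨c', d', hc', hd', hb⟩ := decomp b
    have hbe : b • e i = (⟨c', hc'⟩ : A0) • e i + (⟨d', hd'⟩ : A0) • ((T 1 : A) • e i) := by
      show b • e i = c' • e i + d' • ((T 1 : A) • e i)
      rw [hb, add_smul, smul_smul]
    rw [hbe, (mul _).map_add, (mul _).map_smul, (mul _).map_smul, h1, h2]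
    show c' • ((T 1 : A) • e i) + d' • ((T 2 : A) • e i) = ((T 1 : A) * b) • e i
    rw [smul_smul, smul_smul, ← add_smul]
    congr 1
    linear_combination (-(T 1 : A)) * hb + (-d') * a1
  intro a b
  obtain ⟨c, d, hc, hd, ha⟩ := decomp a
  have hae : a • e 0 = (⟨c, hc⟩ : A0) • e 0 + (⟨d, hd⟩ : A0) • ((T 1 : A) • e 0) := by
    show a • e 0 = c • e 0 + d • ((T 1 : A) • e 0)
    rw [ha, add_smul, smul_smul]
  rw [hae, mul.map_add, mul.map_smul, mul.map_smul, LinearMap.add_apply,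
    LinearMap.smul_apply, LinearMap.smul_apply, (hid (b • e i)).1, inner b]
  show c • (b • e i) + d • (((T 1 : A) * b) • e i) = (a * b) • e i
  rw [smul_smul, smul_smul, ← add_smul]
  congr 1
  linear_combination (-b) * ha

include hid in
lemma scalarQ (i : Fin 4)
    (h1 : mul ((T 1 : A) • e 0) (e i) = (T (-1) : A) • e i)
    (h2 : mul ((T 1 : A) • e 0) ((T 1 : A) • e i) = e i) :
    ∀ a b : A, mul (a • e 0) (b • e i) = (conj a * b) • e i := by
  have a1 : (T (-1) : A) * T 1 = 1 := by rw [Tm_mul_T]; norm_num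
  have inner : ∀ b : A, mul ((T 1 : A) • e 0) (b • e i) = ((T (-1) : A) * b) • e i := by
    intro b
    obtain ⟨c', d', hc', hd', hb⟩ := decomp b
    have hbe : b • e i = (⟨c', hc'⟩ : A0) • e i + (⟨d', hd'⟩ : A0) • ((T 1 : A) • e i) := by
      show b • e i = c' • e i + d' • ((T 1 : A) • e i)
      rw [hb, add_smul, smul_smul]
    rw [hbe, (mul _).map_add, (mul _).map_smul, (mul _).map_smul, h1, h2]
    show c' • ((T (-1) : A) • e i) + d' • e i = ((T (-1) : A) * b) • e i
    rw [smul_smul, ← add_smul]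
    congr 1
    linear_combination (-(T (-1) : A)) * hb + (-d') * a1
  intro a b
  obtain ⟨c, d, hc, hd, ha⟩ := decomp a
  have hconj : conj a = c + d * T (-1) := by
    rw [ha, map_add, map_mul, hc, hd, conj_T]
  have hae : a • e 0 = (⟨c, hc⟩ : A0) • e 0 + (⟨d, hd⟩ : A0) • ((T 1 : A) • e 0) := by
    show a • e 0 = c • e 0 + d • ((T 1 : A) • e 0)
    rw [ha, add_smul, smul_smul]
  rw [hae, mul.map_add, mul.map_smul, mul.map_smul, LinearMap.add_apply,
    LinearMap.smul_apply, LinearMap.smul_apply, (hid (b • e i)).1, inner b]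
  show c • (b • e i) + d • (((T (-1) : A) * b) • e i) = (conj a * b) • e i
  rw [smul_smul, smul_smul, ← add_smul]
  congr 1
  linear_combination (-b) * hconj

end ACT

/-- Lemma 4.4: for each index `i`, either `(a e₀)·(b eᵢ) = a b eᵢ` for all `a, b`,
or `(a e₀)·(b eᵢ) = a* b eᵢ` for all `a, b`; for `i = 0` necessarily the former
holds.  Consequently there is an involution `τ ∈ Γ` (given by conjugating the
coordinates in a subset, encoded by `ε : Fin 4 → Bool`) such that the modified
multiplication `x ⋆ y = τ(τ(x)·τ(y))` satisfies the Lagrange identity, has `e₀`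
as identity, satisfies `(a e₀) ⋆ y = a y`, and `τ : (E,⋆) → (E,·)` is an
isomorphism of unital `A₀`-algebras. -/
theorem scalar_action_lemma (mul : E →ₗ[A0] E →ₗ[A0] E)
    (hL : ∀ x y : E, N (mul x y) = N x * N y)
    (hid : ∀ x : E, mul (e 0) x = x ∧ mul x (e 0) = x) :
    (∀ i : Fin 4,
      (∀ a b : A, mul (a • e 0) (b • e i) = (a * b) • e i) ∨
      (∀ a b : A, mul (a • e 0) (b • e i) = (conj a * b) • e i)) ∧
    (∀ a b : A, mul (a • e 0) (b • e 0) = (a * b) • e 0) ∧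
    ∃ ε : Fin 4 → Bool,
      ∀ (τ : E → E) (star : E → E → E),
        τ = (fun x k => if ε k then conj (x k) else x k) →
        star = (fun x y => τ (mul (τ x) (τ y))) →
        τ ∘ τ = id ∧
        (∀ x y : E, N (star x y) = N x * N y) ∧
        (∀ x : E, star (e 0) x = x ∧ star x (e 0) = x) ∧
        (∀ (a : A) (y : E), star (a • e 0) y = a • y) ∧
        -- `τ : (E,⋆) → (E,·)` is an isomorphism of unital `A₀`-algebras:
        Function.Bijective τ ∧
        (∀ x y : E, τ (x + y) = τ x + τ y) ∧
        (∀ (c : A0) (x : E), τ (c • x) = c • τ x) ∧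
        τ (e 0) = e 0 ∧
        (∀ x y : E, τ (star x y) = mul (τ x) (τ y)) := by
  classical
  have part1 : ∀ i : Fin 4,
      (∀ a b : A, mul (a • e 0) (b • e i) = (a * b) • e i) ∨
      (∀ a b : A, mul (a • e 0) (b • e i) = (conj a * b) • e i) := by
    intro i
    rcases key mul hL hid i with ⟨h1, h2⟩ | ⟨h1, h2⟩
    · exact Or.inl (scalarP mul hid i h1 h2)
    · exact Or.inr (scalarQ mul hid i h1 h2)
  have hT1ne : ¬ ((T 1 : A) • e 0 = (T (-1) : A) • e 0) := by
    intro h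
    rw [smul_e, smul_e] at h
    have h0 := congrFun h 0
    rw [Pi.single_eq_same, Pi.single_eq_same] at h0
    have h1 := coe_congr h0 1
    rw [T_apply, T_apply] at h1
    norm_num at h1
  have part2 : ∀ a b : A, mul (a • e 0) (b • e 0) = (a * b) • e 0 := by
    rcases key mul hL hid 0 with ⟨h1, h2⟩ | ⟨h1, h2⟩
    · exact scalarP mul hid 0 h1 h2
    · exact absurd (((hid ((T 1 : A) • e 0)).2.symm.trans h1)) hT1ne
  refine ⟨part1, part2, ?_⟩
  let Pd : Fin 4 → Prop := fun i => ∀ a b : A, mul (a • e 0) (b • e i) = (a * b) • e i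
  let εf : Fin 4 → Bool := fun i => if Pd i then false else true
  have hPd : ∀ i, (εf i = false ∧ Pd i) ∨
      (εf i = true ∧ ∀ a b : A, mul (a • e 0) (b • e i) = (conj a * b) • e i) := by
    intro i
    by_cases h : Pd i
    · exact Or.inl ⟨by show (if Pd i then false else true) = false; rw [if_pos h], h⟩
    · exact Or.inr ⟨by show (if Pd i then false else true) = true; rw [if_neg h],
        (part1 i).resolve_left h⟩
  have hε0 : εf 0 = false := by
    show (if Pd 0 then false else true) = false
    rw [if_pos part2]
  have hact : ∀ (i : Fin 4) (a b : A),
      mul (a • e 0) (b • e i) = ((if εf i then conj a else a) * b) • e i := by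
    intro i a b
    rcases hPd i with ⟨hf, hp⟩ | ⟨ht, hq⟩
    · rw [hf]; simp only [Bool.false_eq_true, if_false]; exact hp a b
    · rw [ht]; simp only [if_true]; exact hq a b
  refine ⟨εf, ?_⟩
  intro τ star hτ hstar
  have hτap : ∀ (x : E) (k : Fin 4), τ x k = if εf k then conj (x k) else x k := by
    intro x k; rw [hτ]
  have hstar' : ∀ x y, star x y = τ (mul (τ x) (τ y)) := by
    intro x y; rw [hstar]
  have hττ : ∀ x, τ (τ x) = x := by
    intro x; funext k
    rw [hτap, hτap]
    by_cases h : εf k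
    · rw [h]; simp only [if_true]; exact conj_conj _
    · simp only [h, Bool.false_eq_true, if_false]
  have hNτ : ∀ x, N (τ x) = N x := by
    intro x
    unfold N
    apply Finset.sum_congr rfl
    intro k _
    rw [hτap]
    by_cases h : εf k
    · rw [h]; simp only [if_true]; rw [conj_conj]; ring
    · simp only [h, Bool.false_eq_true, if_false]
  have hτe0 : τ (e 0) = e 0 := by
    funext k
    rw [hτap]
    by_cases h : εf k
    · rw [h]; simp only [if_true]
      by_cases hk : k = 0
      · subst hk; rw [e_def, Pi.single_eq_same, map_one]
      · rw [e_def, Pi.single_eq_of_ne hk, map_zero]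
    · simp only [h, Bool.false_eq_true, if_false]
  have hτsm0 : ∀ a : A, τ (a • e 0) = a • e 0 := by
    intro a; funext k
    rw [hτap]
    by_cases hk : k = 0
    · subst hk; rw [hε0]; simp only [Bool.false_eq_true, if_false]
    · by_cases h : εf k
      · rw [h]; simp only [if_true]
        rw [smul_e, Pi.single_eq_of_ne hk, map_zero]
      · simp only [h, Bool.false_eq_true, if_false]
  have hgen : ∀ (a : A) (w : E),
      mul (a • e 0) w = fun i => (if εf i then conj a else a) * w i := by
    intro a w
    have hw : ∑ i, Pi.single i (w i) = w := Finset.univ_sum_single w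
    conv_lhs => rw [← hw]
    rw [map_sum]
    rw [Finset.sum_congr rfl (fun i (_ : i ∈ Finset.univ) => by
      rw [← smul_e, hact i a (w i), smul_e])]
    exact Finset.univ_sum_single _
  refine ⟨?_, ?_, ?_, ?_, ?_, ?_, ?_, hτe0, ?_⟩
  · funext x; exact hττ x
  · intro x y
    rw [hstar', hNτ, hL, hNτ, hNτ]
  · intro x
    constructor
    · rw [hstar', hτe0, (hid (τ x)).1, hττ]
    · rw [hstar', hτe0, (hid (τ x)).2, hττ]
  · intro a y
    rw [hstar', hτsm0, hgen a (τ y)]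
    funext k
    rw [hτap]
    by_cases h : εf k
    · rw [h]
      simp only [if_true]
      rw [map_mul, conj_conj, hτap, h]
      simp only [if_true]
      rw [conj_conj]
      rfl
    · simp only [h, Bool.false_eq_true, if_false]
      rw [hτap]
      simp only [h, Bool.false_eq_true, if_false]
      rfl
  · exact Function.Involutive.bijective hττ
  · intro x y
    funext k
    have hr : (τ x + τ y) k = τ x k + τ y k := rfl
    rw [hτap, hr, hτap, hτap, Pi.add_apply]
    by_cases h : εf k
    · rw [h]; simp only [if_true, map_add]
    · simp only [h, Bool.false_eq_true, if_false]
  · intro c x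
    funext k
    rw [hτap]
    have hck : (c • x) k = (c : A) * x k := rfl
    have hck2 : (c • τ x) k = (c : A) * τ x k := rfl
    by_cases h : εf k
    · rw [h]; simp only [if_true]
      rw [hck, hck2, map_mul, hτap, h]
      simp only [if_true]
      congr 1
      exact c.2
    · simp only [h, Bool.false_eq_true, if_false]
      rw [hck, hck2, hτap]
      simp only [h, Bool.false_eq_true, if_false]
  · intro x y
    rw [hstar', hττ]
end
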